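/- Let N ≥ 2 be an integer and let d ≥ 1, i ≥ 2 be integers with N(i − 1) = d(d + i). Let α be a real number with α > 0 such that ⌊N/α − α⌋ = d + i, ⌊N/(α+1) − α⌋ = d, and such that N/(d+1+α) < N/α − (d+i) < α + 1 and α < N/(α+1) − d < N/(d+i+α). Define T(x) = N/x − ⌊N/x − α⌋. Then there exists an integer k with d ≤ k ≤ d+i−1 such that ⌊N/T²(α) − α⌋ = k and ⌊N/T²(α+1) − α⌋ = k + 1, and moreover T³(α) = T³(α+1). -/

import Mathlib

/-- The `N`-expansion map with parameter `α`: `T(x) = N/x − ⌊N/x − α⌋`. -/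
noncomputable def NExpMap (N : ℕ) (α : ℝ) (x : ℝ) : ℝ :=
  (N : ℝ) / x - ⌊(N : ℝ) / x - α⌋

set_option maxHeartbeats 1000000 in
/-- Matching in 3 steps: let `N ≥ 2`, `d ≥ 1`, `i ≥ 2` with `N(i−1) = d(d+i)`,
and let `α > 0` have digit set `{d, …, d+i}` with `T(α)` in the interior of the
cylinder `I_d` and `T(α+1)` in the interior of `I_{d+i}`. Then there is a digit
`k` with `d ≤ k ≤ d+i−1` such that `T²(α) ∈ I_k`, `T²(α+1) ∈ I_{k+1}`, and
`T³(α) = T³(α+1)`. -/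
theorem matching_in_three_steps (N : ℕ) (hN : 2 ≤ N) (d i : ℕ)
    (hd : 1 ≤ d) (hi : 2 ≤ i) (hNdi : N * (i - 1) = d * (d + i))
    (α : ℝ) (hα : 0 < α)
    (hdig1 : ⌊(N : ℝ) / α - α⌋ = (d : ℤ) + i)
    (hdig2 : ⌊(N : ℝ) / (α + 1) - α⌋ = (d : ℤ))
    (h1 : (N : ℝ) / (d + 1 + α) < (N : ℝ) / α - (d + i))
    (h2 : (N : ℝ) / α - (d + i) < α + 1)
    (h3 : α < (N : ℝ) / (α + 1) - d)
    (h4 : (N : ℝ) / (α + 1) - d < (N : ℝ) / (d + i + α)) :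
    ∃ k : ℤ, (d : ℤ) ≤ k ∧ k ≤ (d : ℤ) + i - 1 ∧
      ⌊(N : ℝ) / (NExpMap N α (NExpMap N α α)) - α⌋ = k ∧
      ⌊(N : ℝ) / (NExpMap N α (NExpMap N α (α + 1))) - α⌋ = k + 1 ∧
      NExpMap N α (NExpMap N α (NExpMap N α α)) =
        NExpMap N α (NExpMap N α (NExpMap N α (α + 1))) := by
  have hNpos : (0:ℝ) < N := by positivity
  have hdR : (1:ℝ) ≤ d := by exact_mod_cast hd
  have hiR : (2:ℝ) ≤ i := by exact_mod_cast hi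
  have hα1 : (0:ℝ) < α + 1 := by linarith
  -- cast of the matching condition
  have hNdiR : (N : ℝ) * ((i : ℝ) - 1) = (d : ℝ) * (d + i) := by
    have h1i : 1 ≤ i := le_trans (by norm_num) hi
    have h := congrArg (fun n : ℕ => (n : ℝ)) hNdi
    push_cast [Nat.cast_sub h1i] at h
    linarith [h]
  -- first iterates
  set A : ℝ := (N : ℝ) / α - (d + i) with hAdef
  set B : ℝ := (N : ℝ) / (α + 1) - d with hBdef
  have hTα : NExpMap N α α = A := by
    rw [NExpMap, hdig1, hAdef]; push_cast; ring
  have hTα1 : NExpMap N α (α + 1) = B := by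
    rw [NExpMap, hdig2, hBdef]; push_cast; ring
  have hApos : 0 < A := lt_trans (by positivity) h1
  have hBpos : 0 < B := lt_trans hα h3
  -- bounds on N/A and N/B
  have hNA_lt : (N : ℝ) / A < (d : ℝ) + 1 + α := by
    rw [div_lt_iff₀ hApos]
    have h1' := (div_lt_iff₀ (by positivity : (0:ℝ) < (d : ℝ) + 1 + α)).mp h1
    nlinarith [h1']
  have hNA_gt : (d : ℝ) + α < (N : ℝ) / A := by
    have hNB : (d : ℝ) + α < (N : ℝ) / (α + 1) := by
      have := h3; rw [hBdef] at this; linarith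
    have hlt : (N : ℝ) / (α + 1) < (N : ℝ) / A :=
      div_lt_div_of_pos_left hNpos hApos h2
    linarith
  have hNB_gt : (d : ℝ) + i + α < (N : ℝ) / B := by
    have hpos : (0:ℝ) < (d : ℝ) + i + α := by positivity
    rw [lt_div_iff₀ hBpos]
    have h4' := (lt_div_iff₀ hpos).mp h4
    nlinarith [h4']
  have hNB_lt : (N : ℝ) / B < (d : ℝ) + i + 1 + α := by
    have hlt : (N : ℝ) / B < (N : ℝ) / α :=
      div_lt_div_of_pos_left hNpos hα h3
    have hNα : (N : ℝ) / α < (d : ℝ) + i + 1 + α := by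
      have := h2; rw [hAdef] at this; linarith
    linarith
  -- digits of A and B
  have hdigA : ⌊(N : ℝ) / A - α⌋ = (d : ℤ) := by
    rw [Int.floor_eq_iff]
    constructor
    · push_cast; linarith
    · push_cast; linarith
  have hdigB : ⌊(N : ℝ) / B - α⌋ = (d : ℤ) + i := by
    rw [Int.floor_eq_iff]
    constructor
    · push_cast; linarith
    · push_cast; linarith
  set u : ℝ := (N : ℝ) / A - d with hudef
  set v : ℝ := (N : ℝ) / B - ((d : ℝ) + i) with hvdef
  have hT2α : NExpMap N α A = u := by
    rw [NExpMap, hdigA, hudef]; push_cast; ring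
  have hT2α1 : NExpMap N α B = v := by
    rw [NExpMap, hdigB, hvdef]; push_cast; ring
  have huα : α < u := by rw [hudef]; linarith
  have huα1 : u < α + 1 := by rw [hudef]; linarith
  have hvα : α < v := by rw [hvdef]; linarith
  have hupos : 0 < u := lt_trans hα huα
  have hvpos : 0 < v := lt_trans hα hvα
  -- closed forms
  have hαA : (N : ℝ) - ((d : ℝ) + i) * α = α * A := by
    rw [hAdef]; field_simp
  have hαApos : 0 < (N : ℝ) - ((d : ℝ) + i) * α := by rw [hαA]; positivity
  have hα1B : (N : ℝ) - (d : ℝ) * (α + 1) = (α + 1) * B := by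
    rw [hBdef]; field_simp
  have hα1Bpos : 0 < (N : ℝ) - (d : ℝ) * (α + 1) := by rw [hα1B]; positivity
  have hNA : (N : ℝ) / A = α * (N : ℝ) / ((N : ℝ) - ((d : ℝ) + i) * α) := by
    rw [hαA, mul_div_mul_left _ _ (ne_of_gt hα)]
  have hNB : (N : ℝ) / B = (α + 1) * (N : ℝ) / ((N : ℝ) - (d : ℝ) * (α + 1)) := by
    rw [hα1B, mul_div_mul_left _ _ (ne_of_gt hα1)]
  have hu_eq : u = (N : ℝ) * ((i : ℝ) * α - d) / ((N : ℝ) - ((d : ℝ) + i) * α) := by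
    rw [hudef, hNA, eq_div_iff (ne_of_gt hαApos), sub_mul,
      div_mul_cancel₀ _ (ne_of_gt hαApos)]
    linear_combination (-α) * hNdiR
  have hv_eq : v = (N : ℝ) * ((i : ℝ) * α - d) / ((N : ℝ) - (d : ℝ) * (α + 1)) := by
    rw [hvdef, hNB, eq_div_iff (ne_of_gt hα1Bpos), sub_mul,
      div_mul_cancel₀ _ (ne_of_gt hα1Bpos)]
    linear_combination (-(α + 1)) * hNdiR
  -- positivity of iα − d
  have hiαd : 0 < (i : ℝ) * α - d := by
    have hu' := hupos
    rw [hu_eq] at hu'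
    rcases div_pos_iff.mp hu' with ⟨h, _⟩ | ⟨_, h⟩
    · rcases mul_pos_iff.mp h with ⟨_, h'⟩ | ⟨h', _⟩
      · exact h'
      · linarith
    · linarith
  -- the key identity  N/v = N/u + 1
  have hNu : (N : ℝ) / u = ((N : ℝ) - ((d : ℝ) + i) * α) / ((i : ℝ) * α - d) := by
    rw [hu_eq, div_div_eq_mul_div, mul_div_mul_left _ _ (ne_of_gt hNpos)]
  have hNv : (N : ℝ) / v = ((N : ℝ) - (d : ℝ) * (α + 1)) / ((i : ℝ) * α - d) := by
    rw [hv_eq, div_div_eq_mul_div, mul_div_mul_left _ _ (ne_of_gt hNpos)]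
  have hkey : (N : ℝ) / v = (N : ℝ) / u + 1 := by
    have hsplit : (N : ℝ) - (d : ℝ) * (α + 1) =
        ((N : ℝ) - ((d : ℝ) + i) * α) + ((i : ℝ) * α - d) := by ring
    rw [hNu, hNv, hsplit, add_div, div_self (ne_of_gt hiαd)]
  set k : ℤ := ⌊(N : ℝ) / u - α⌋ with hk
  have hfloorv : ⌊(N : ℝ) / v - α⌋ = k + 1 := by
    have : (N : ℝ) / v - α = ((N : ℝ) / u - α) + 1 := by rw [hkey]; ring
    rw [this, Int.floor_add_one, hk]
  -- bounds on k
  have hNu_gt : (d : ℝ) + α < (N : ℝ) / u := by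
    have hlt : (N : ℝ) / (α + 1) < (N : ℝ) / u :=
      div_lt_div_of_pos_left hNpos hupos huα1
    have hNB' : (d : ℝ) + α < (N : ℝ) / (α + 1) := by
      have := h3; rw [hBdef] at this; linarith
    linarith
  have hk1 : (d : ℤ) ≤ k := by
    rw [hk]
    apply Int.le_floor.mpr
    push_cast
    linarith
  have hNv_lt : (N : ℝ) / v - α < (d : ℝ) + i + 1 := by
    have hlt : (N : ℝ) / v < (N : ℝ) / α :=
      div_lt_div_of_pos_left hNpos hα hvα
    have hNα : (N : ℝ) / α < (d : ℝ) + i + 1 + α := by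
      have := h2; rw [hAdef] at this; linarith
    linarith
  have hk2 : k ≤ (d : ℤ) + i - 1 := by
    have : ⌊(N : ℝ) / v - α⌋ < (d : ℤ) + i + 1 := by
      apply Int.floor_lt.mpr
      push_cast
      linarith
    rw [hfloorv] at this
    omega
  refine ⟨k, hk1, hk2, ?_, ?_, ?_⟩
  · rw [hTα, hT2α, hk]
  · rw [hTα1, hT2α1, hfloorv]
  · rw [hTα, hT2α, hTα1, hT2α1]
    show (N : ℝ) / u - ⌊(N : ℝ) / u - α⌋ = (N : ℝ) / v - ⌊(N : ℝ) / v - α⌋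
    rw [hfloorv, ← hk, hkey]
    push_cast
    ring
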